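/- Let λ_n > 0 be a sequence tending to infinity, (e_n) an orthonormal system in L²(Γ), and g smooth so that Σ λ_n^k |g_n|² < ∞ for all k, where g_n = ⟨e_n, g⟩. Define J_D^h[g] = −Σ √λ_n g_n e_n / tanh(√λ_n h) and J_D^∞[g] = −Σ √λ_n g_n e_n. Then J_D^h[g] → J_D^∞[g] in L²(Γ) as h → ∞, and ‖J_D^h[g] − J_D^H[g]‖ = O(|h − H|) uniformly for h, H in compact subsets of (0,∞). -/

import Mathlib

open Real Filter

-- coth basics
lemma aux_one_le_coth {x : ℝ} (hx : 0 < x) : 1 ≤ 1 / Real.tanh x := by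
  rw [Real.tanh_eq_sinh_div_cosh, one_div_div]
  have h1 := Real.sinh_pos_iff.2 hx
  exact (one_le_div h1).2 (Real.sinh_lt_cosh x).le

lemma aux_coth_sub_one_le {x : ℝ} (hx : 0 < x) : 1 / Real.tanh x - 1 ≤ 1 / x := by
  rw [Real.tanh_eq_sinh_div_cosh, one_div_div]
  have h1 := Real.sinh_pos_iff.2 hx
  rw [div_sub_one h1.ne', Real.cosh_sub_sinh, div_le_div_iff₀ h1 hx]
  have h2 : Real.sinh x = (Real.exp x - Real.exp (-x)) / 2 := Real.sinh_eq x
  have h3 := Real.add_one_le_exp (2 * x)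
  have h4 : Real.exp (2 * x) = Real.exp x * Real.exp x := by
    rw [two_mul, Real.exp_add]
  have h5 : Real.exp (-x) * Real.exp x = 1 := by
    rw [← Real.exp_add]; simp
  nlinarith [Real.exp_pos x, Real.exp_pos (-x)]

lemma aux_coth_diff_le {x y : ℝ} (hx : 0 < x) (hxy : x ≤ y) :
    |1 / Real.tanh x - 1 / Real.tanh y| ≤ (y - x) / x ^ 2 := by
  rcases eq_or_lt_of_le hxy with rfl | hlt
  · simp only [sub_self, abs_zero, sub_self, zero_div]
    positivity
  · have hy : 0 < y := hx.trans hlt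
    set f : ℝ → ℝ := fun t => Real.cosh t / Real.sinh t with hf
    set f' : ℝ → ℝ := fun t => -(1 / Real.sinh t ^ 2) with hf'
    have hderiv : ∀ t ∈ Set.Ioo x y, HasDerivAt f (f' t) t := by
      intro t ht
      have htpos : 0 < t := hx.trans ht.1
      have hst := Real.sinh_pos_iff.2 htpos
      have h := (Real.hasDerivAt_cosh t).div (Real.hasDerivAt_sinh t) hst.ne'
      refine h.congr_deriv ?_
      have := Real.cosh_sq_sub_sinh_sq t
      have hst' := hst.ne'
      simp only [hf']
      field_simp [hf']
      nlinarith
    have hcont : ContinuousOn f (Set.Icc x y) := by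
      apply ContinuousOn.div Real.continuous_cosh.continuousOn
        Real.continuous_sinh.continuousOn
      intro t ht
      exact (Real.sinh_pos_iff.2 (hx.trans_le ht.1)).ne'
    obtain ⟨c, hc, hceq⟩ := exists_hasDerivAt_eq_slope f f' hlt hcont hderiv
    have hcpos : 0 < c := hx.trans hc.1
    have hsc : c < Real.sinh c := Real.self_lt_sinh_iff.2 hcpos
    have hfx : f y - f x = f' c * (y - x) := by
      rw [hceq, div_mul_cancel₀]
      exact (sub_pos.2 hlt).ne'
    have hxy' : 0 < y - x := sub_pos.2 hlt
    have key : |f x - f y| ≤ (y - x) / x ^ 2 := by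
      rw [abs_sub_comm, hfx]
      rw [abs_mul, abs_of_pos hxy', hf']
      have h1 : |-(1 / Real.sinh c ^ 2)| = 1 / Real.sinh c ^ 2 := by
        rw [abs_neg, abs_of_pos]
        positivity
      rw [h1]
      rw [div_eq_mul_one_div (y - x) (x^2), mul_comm (1 / Real.sinh c ^2)]
      apply mul_le_mul_of_nonneg_left _ hxy'.le
      apply one_div_le_one_div_of_le (by positivity)
      have : x ≤ c := hc.1.le
      nlinarith
    have hfx' : 1 / Real.tanh x = f x := by
      rw [Real.tanh_eq_sinh_div_cosh, one_div_div]
    have hfy' : 1 / Real.tanh y = f y := by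
      rw [Real.tanh_eq_sinh_div_cosh, one_div_div]
    rw [hfx', hfy']
    exact key

lemma aux_coth_diff_le' {m x y : ℝ} (hm : 0 < m) (hx : m ≤ x) (hy : m ≤ y) :
    |1 / Real.tanh x - 1 / Real.tanh y| ≤ |x - y| / m ^ 2 := by
  rcases le_total x y with h | h
  · calc |1 / Real.tanh x - 1 / Real.tanh y| ≤ (y - x) / x ^ 2 :=
        aux_coth_diff_le (hm.trans_le hx) h
      _ ≤ |x - y| / m ^ 2 := by
        rw [abs_sub_comm, abs_of_nonneg (sub_nonneg.2 h)]
        apply div_le_div_of_nonneg_left (sub_nonneg.2 h) (by positivity)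
        · exact pow_le_pow_left₀ hm.le hx 2
  · rw [abs_sub_comm]
    calc |1 / Real.tanh y - 1 / Real.tanh x| ≤ (x - y) / y ^ 2 :=
        aux_coth_diff_le (hm.trans_le hy) h
      _ ≤ |x - y| / m ^ 2 := by
        rw [abs_of_nonneg (sub_nonneg.2 h)]
        apply div_le_div_of_nonneg_left (sub_nonneg.2 h) (by positivity)
        · exact pow_le_pow_left₀ hm.le hy 2

lemma aux_summable_smul {X : Type*} [NormedAddCommGroup X] [InnerProductSpace ℝ X]
    [CompleteSpace X] {e : ℕ → X} (he : Orthonormal ℝ e) {f : ℕ → ℝ}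
    (hf : Summable fun n => f n ^ 2) : Summable fun n => f n • e n := by
  have h := (he.orthogonalFamily.summable_iff_norm_sq_summable f).2
    (by simpa [Real.norm_eq_abs, sq_abs] using hf)
  simpa [LinearIsometry.toSpanSingleton_apply] using h

lemma aux_norm_sum_sq {X : Type*} [NormedAddCommGroup X] [InnerProductSpace ℝ X]
    {e : ℕ → X} (he : Orthonormal ℝ e) (f : ℕ → ℝ) (s : Finset ℕ) :
    ‖∑ i ∈ s, f i • e i‖ ^ 2 = ∑ i ∈ s, f i ^ 2 := by
  have h := he.orthogonalFamily.norm_sum (fun i => f i) s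
  simpa [LinearIsometry.toSpanSingleton_apply, Real.norm_eq_abs, sq_abs] using h

lemma aux_norm_tsum_le {X : Type*} [NormedAddCommGroup X] [InnerProductSpace ℝ X]
    [CompleteSpace X] {e : ℕ → X} (he : Orthonormal ℝ e) {f : ℕ → ℝ}
    (hf : Summable fun n => f n ^ 2) {B : ℝ} (hB : 0 ≤ B)
    (hfB : ∑' n, f n ^ 2 ≤ B ^ 2) : ‖∑' n, f n • e n‖ ≤ B := by
  have hsum := aux_summable_smul he hf
  have H : Tendsto (fun s : Finset ℕ => ∑ i ∈ s, f i • e i) atTop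
      (nhds (∑' n, f n • e n)) := hsum.hasSum
  refine le_of_tendsto H.norm (Filter.Eventually.of_forall fun s => ?_)
  have h1 : ‖∑ i ∈ s, f i • e i‖ ^ 2 ≤ B ^ 2 := by
    rw [aux_norm_sum_sq he f s]
    exact le_trans (Summable.sum_le_tsum s (fun i _ => sq_nonneg _) hf) hfB
  exact (pow_le_pow_iff_left₀ (norm_nonneg _) hB two_ne_zero).1 h1

/-- Convergence of the Dirichlet-to-Neumann operators: with eigenvalues `λ_n → ∞`,
orthonormal eigenfunctions `e_n` and rapidly decaying Fourier coefficients `g_n`,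
`J_D^h[g] = −Σ √λ_n g_n e_n / tanh(√λ_n h)` converges in `L²(Γ)` to
`J_D^∞[g] = −Σ √λ_n g_n e_n` as `h → ∞`, and is Lipschitz in `h` uniformly on
compact subsets of `(0,∞)`. -/
theorem stmt_17 (X : Type*) [NormedAddCommGroup X] [InnerProductSpace ℝ X]
    [CompleteSpace X]
    (e : ℕ → X) (he : Orthonormal ℝ e)
    (lamn : ℕ → ℝ) (hpos : ∀ n, 0 < lamn n) (hinf : Tendsto lamn atTop atTop)
    (gn : ℕ → ℝ)
    (hdecay : ∀ k : ℕ, Summable (fun n => lamn n ^ k * (gn n) ^ 2)) :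
    let JD : ℝ → X := fun h =>
      -∑' n, (Real.sqrt (lamn n) * gn n / Real.tanh (Real.sqrt (lamn n) * h)) • e n
    let JDinf : X := -∑' n, (Real.sqrt (lamn n) * gn n) • e n
    Tendsto JD atTop (nhds JDinf) ∧
    (∀ a b : ℝ, 0 < a → a ≤ b →
      ∃ C : ℝ, 0 ≤ C ∧ ∀ h ∈ Set.Icc a b, ∀ H ∈ Set.Icc a b,
        ‖JD h - JD H‖ ≤ C * |h - H|) := by
  intro JD JDinf
  set c : ℝ → ℕ → ℝ :=
    fun h n => Real.sqrt (lamn n) * gn n / Real.tanh (Real.sqrt (lamn n) * h) with hc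
  set d : ℕ → ℝ := fun n => Real.sqrt (lamn n) * gn n with hd
  have hsq : ∀ n, 0 < Real.sqrt (lamn n) := fun n => Real.sqrt_pos.2 (hpos n)
  have hd2 : ∀ n, d n ^ 2 = lamn n * gn n ^ 2 := by
    intro n
    rw [hd, mul_pow, Real.sq_sqrt (hpos n).le]
  have hsumd : Summable fun n => d n ^ 2 := by
    have h1 := hdecay 1
    simp only [pow_one] at h1
    simpa [hd2] using h1
  have hS0 : Summable fun n => gn n ^ 2 := by simpa using hdecay 0
  set S0 := ∑' n, gn n ^ 2 with hS0def
  have hS0nn : 0 ≤ S0 := tsum_nonneg fun n => sq_nonneg _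
  -- pointwise bound 1
  have bound1 : ∀ h : ℝ, 0 < h → ∀ n, |d n - c h n| ≤ |gn n| / h := by
    intro h hh n
    have hx : 0 < Real.sqrt (lamn n) * h := mul_pos (hsq n) hh
    have h1 : c h n = d n * (1 / Real.tanh (Real.sqrt (lamn n) * h)) := by
      simp only [hc, hd]; ring
    have h2 : |d n - c h n| = |d n| * (1 / Real.tanh (Real.sqrt (lamn n) * h) - 1) := by
      rw [h1, abs_sub_comm]
      have h2' : d n * (1 / Real.tanh (Real.sqrt (lamn n) * h)) - d n
          = d n * (1 / Real.tanh (Real.sqrt (lamn n) * h) - 1) := by ring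
      rw [h2', abs_mul, abs_of_nonneg (sub_nonneg.2 (aux_one_le_coth hx))]
    rw [h2]
    have h3 : |d n| = Real.sqrt (lamn n) * |gn n| := by
      rw [hd, abs_mul, abs_of_nonneg (Real.sqrt_nonneg _)]
    calc |d n| * (1 / Real.tanh (Real.sqrt (lamn n) * h) - 1)
        ≤ |d n| * (1 / (Real.sqrt (lamn n) * h)) :=
          mul_le_mul_of_nonneg_left (aux_coth_sub_one_le hx) (abs_nonneg _)
      _ = |gn n| / h := by
          rw [h3]
          have hs := (hsq n).ne'
          field_simp
  -- pointwise bound 2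
  have bound2 : ∀ a : ℝ, 0 < a → ∀ h H : ℝ, a ≤ h → a ≤ H → ∀ n,
      |c h n - c H n| ≤ |gn n| * |h - H| / a ^ 2 := by
    intro a ha h H hah haH n
    have hm : 0 < Real.sqrt (lamn n) * a := mul_pos (hsq n) ha
    have hx : Real.sqrt (lamn n) * a ≤ Real.sqrt (lamn n) * h :=
      mul_le_mul_of_nonneg_left hah (hsq n).le
    have hy : Real.sqrt (lamn n) * a ≤ Real.sqrt (lamn n) * H :=
      mul_le_mul_of_nonneg_left haH (hsq n).le
    have key := aux_coth_diff_le' hm hx hy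
    have h1 : c h n - c H n = d n * (1 / Real.tanh (Real.sqrt (lamn n) * h)
        - 1 / Real.tanh (Real.sqrt (lamn n) * H)) := by
      simp only [hc, hd]; ring
    rw [h1, abs_mul]
    have h3 : |d n| = Real.sqrt (lamn n) * |gn n| := by
      rw [hd, abs_mul, abs_of_nonneg (Real.sqrt_nonneg _)]
    calc |d n| * |1 / Real.tanh (Real.sqrt (lamn n) * h)
          - 1 / Real.tanh (Real.sqrt (lamn n) * H)|
        ≤ |d n| * (|Real.sqrt (lamn n) * h - Real.sqrt (lamn n) * H|
            / (Real.sqrt (lamn n) * a) ^ 2) :=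
          mul_le_mul_of_nonneg_left key (abs_nonneg _)
      _ = |gn n| * |h - H| / a ^ 2 := by
          rw [h3]
          have h4 : |Real.sqrt (lamn n) * h - Real.sqrt (lamn n) * H|
              = Real.sqrt (lamn n) * |h - H| := by
            rw [← mul_sub, abs_mul, abs_of_nonneg (Real.sqrt_nonneg _)]
          rw [h4]
          have hs := (hsq n).ne'
          field_simp
  -- pointwise squared bound 1
  have hptsq : ∀ h : ℝ, 0 < h → ∀ n, (d n - c h n) ^ 2 ≤ gn n ^ 2 / h ^ 2 := by
    intro h hh n
    calc (d n - c h n) ^ 2 = |d n - c h n| ^ 2 := (sq_abs _).symm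
      _ ≤ (|gn n| / h) ^ 2 := pow_le_pow_left₀ (abs_nonneg _) (bound1 h hh n) 2
      _ = gn n ^ 2 / h ^ 2 := by rw [div_pow, sq_abs]
  have hsum_sub : ∀ h : ℝ, 0 < h → Summable fun n => (d n - c h n) ^ 2 := fun h hh =>
    Summable.of_nonneg_of_le (fun n => sq_nonneg _) (hptsq h hh) (hS0.div_const (h ^ 2))
  have hsum_c : ∀ h : ℝ, 0 < h → Summable fun n => c h n • e n := by
    intro h hh
    have h1 := aux_summable_smul he (hsum_sub h hh)
    have h2 := aux_summable_smul he hsumd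
    exact (h2.sub h1).congr fun n => by rw [← sub_smul]; ring_nf
  have hsum_d : Summable fun n => d n • e n := aux_summable_smul he hsumd
  -- difference formula
  have hdiff : ∀ h : ℝ, 0 < h → JD h - JDinf = ∑' n, (d n - c h n) • e n := by
    intro h hh
    calc JD h - JDinf = (∑' n, d n • e n) - ∑' n, c h n • e n := by
          show (-∑' n, c h n • e n) - (-∑' n, d n • e n) = _
          rw [neg_sub_neg]
      _ = ∑' n, (d n • e n - c h n • e n) := (Summable.tsum_sub hsum_d (hsum_c h hh)).symm
      _ = ∑' n, (d n - c h n) • e n := tsum_congr fun n => (sub_smul _ _ _).symm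
  -- norm bound 1
  have hnorm1 : ∀ h : ℝ, 0 < h → ‖JD h - JDinf‖ ≤ Real.sqrt S0 / h := by
    intro h hh
    rw [hdiff h hh]
    apply aux_norm_tsum_le he (hsum_sub h hh) (by positivity)
    have hB2 : (Real.sqrt S0 / h) ^ 2 = S0 / h ^ 2 := by
      rw [div_pow, Real.sq_sqrt hS0nn]
    rw [hB2]
    calc ∑' n, (d n - c h n) ^ 2 ≤ ∑' n, gn n ^ 2 / h ^ 2 :=
          Summable.tsum_le_tsum (hptsq h hh) (hsum_sub h hh) (hS0.div_const _)
      _ = S0 / h ^ 2 := by rw [← tsum_div_const]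
  constructor
  · -- Tendsto part
    have ht0 : Tendsto (fun h => JD h - JDinf) atTop (nhds 0) := by
      apply squeeze_zero_norm' _
        (Tendsto.div_atTop (tendsto_const_nhds (x := Real.sqrt S0)) tendsto_id)
      filter_upwards [eventually_gt_atTop (0 : ℝ)] with h hh using hnorm1 h hh
    have := ht0.add_const JDinf
    simpa using this
  · -- Lipschitz part
    intro a b ha hab
    refine ⟨Real.sqrt S0 / a ^ 2, by positivity, ?_⟩
    intro h hh H hH
    have hha : 0 < h := lt_of_lt_of_le ha hh.1
    have hHa : 0 < H := lt_of_lt_of_le ha hH.1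
    set K : ℝ := |h - H| ^ 2 / a ^ 4 with hK
    have hKnn : 0 ≤ K := by positivity
    have hpt : ∀ n, (c H n - c h n) ^ 2 ≤ gn n ^ 2 * K := by
      intro n
      have hb := bound2 a ha h H hh.1 hH.1 n
      calc (c H n - c h n) ^ 2 = |c h n - c H n| ^ 2 := by
            rw [sq_abs]; ring
        _ ≤ (|gn n| * |h - H| / a ^ 2) ^ 2 := pow_le_pow_left₀ (abs_nonneg _) hb 2
        _ = gn n ^ 2 * K := by
            rw [hK, div_pow, mul_pow, sq_abs]
            ring
    have hsumK : Summable fun n => gn n ^ 2 * K := hS0.mul_right K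
    have hsum2 : Summable fun n => (c H n - c h n) ^ 2 :=
      Summable.of_nonneg_of_le (fun n => sq_nonneg _) hpt hsumK
    have hdiff2 : JD h - JD H = ∑' n, (c H n - c h n) • e n := by
      calc JD h - JD H = (∑' n, c H n • e n) - ∑' n, c h n • e n := by
            show (-∑' n, c h n • e n) - (-∑' n, c H n • e n) = _
            rw [neg_sub_neg]
        _ = ∑' n, (c H n • e n - c h n • e n) :=
            (Summable.tsum_sub (hsum_c H hHa) (hsum_c h hha)).symm
        _ = ∑' n, (c H n - c h n) • e n := tsum_congr fun n => (sub_smul _ _ _).symm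
    rw [hdiff2]
    apply aux_norm_tsum_le he hsum2 (by positivity)
    have hB2 : (Real.sqrt S0 / a ^ 2 * |h - H|) ^ 2 = S0 * K := by
      rw [hK, mul_pow, div_pow, Real.sq_sqrt hS0nn]
      ring
    rw [hB2]
    calc ∑' n, (c H n - c h n) ^ 2 ≤ ∑' n, gn n ^ 2 * K :=
          Summable.tsum_le_tsum hpt hsum2 hsumK
      _ = S0 * K := by rw [tsum_mul_right]
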